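/- (MNL single-level decomposition.) If an optimal SML assortment S* contains only products from a single level, then for every nonempty Z ⊆ S*, R* = R(S*\Z)·(1 − λ(Z,S*)) + α(Z)·λ(Z,S*); consequently α(Z) ≥ R* by optimality (since R(S*\Z) ≤ R*). -/

import Mathlib

open Finset

/-- Total utility of an assortment. -/
noncomputable def Utot {ι : Type*} (u : ι → ℝ) (S : Finset ι) : ℝ := ∑ x ∈ S, u x

/-- Utility-weighted average revenue α(S). -/
noncomputable def alphaRev {ι : Type*} (u r : ι → ℝ) (S : Finset ι) : ℝ :=
  (∑ x ∈ S, u x * r x) / Utot u S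

/-- MNL expected revenue (single level): R(S) = (∑_{x∈S} r(x)u(x))/(U(S)+u₀). -/
noncomputable def RevMNL {ι : Type*} (u r : ι → ℝ) (u0 : ℝ) (S : Finset ι) : ℝ :=
  (∑ x ∈ S, r x * u x) / (Utot u S + u0)

/-- Single-level decomposition: if S* maximizes the MNL revenue over subsets of X,
then for every nonempty Z ⊆ S*, R* = R(S*∖Z)·(1 − λ(Z,S*)) + α(Z)·λ(Z,S*), and
consequently α(Z) ≥ R*. -/
theorem stmt17 {ι : Type*} [DecidableEq ι] (u r : ι → ℝ) (u0 : ℝ)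
    (X Sstar : Finset ι)
    (hu : ∀ x ∈ X, 0 < u x) (hr : ∀ x, 0 ≤ r x) (hu0 : 0 < u0)
    (hS : Sstar ⊆ X)
    (hopt : ∀ T ⊆ X, RevMNL u r u0 T ≤ RevMNL u r u0 Sstar) :
    ∀ Z ⊆ Sstar, Z.Nonempty →
      RevMNL u r u0 Sstar =
          RevMNL u r u0 (Sstar \ Z) * (1 - Utot u Z / (Utot u Sstar + u0)) +
            alphaRev u r Z * (Utot u Z / (Utot u Sstar + u0)) ∧
        RevMNL u r u0 Sstar ≤ alphaRev u r Z := by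
  intro Z hZS hZne
  set D := Utot u Sstar + u0 with hD
  have hUS : 0 ≤ Utot u Sstar := Finset.sum_nonneg fun x hx => (hu x (hS hx)).le
  have hDpos : 0 < D := by positivity
  have hUZ : 0 < Utot u Z := Finset.sum_pos (fun x hx => hu x (hS (hZS hx))) hZne
  have hUdiff : Utot u (Sstar \ Z) = Utot u Sstar - Utot u Z := by
    have := Finset.sum_sdiff_eq_sub (f := u) hZS
    simpa [Utot] using this
  have hUZlt : Utot u Z < D := by
    have h2 : 0 ≤ Utot u (Sstar \ Z) := Finset.sum_nonneg fun x hx =>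
      (hu x (hS (Finset.mem_sdiff.mp hx).1)).le
    rw [hUdiff] at h2; simp only [hD]; linarith
  have hDZpos : 0 < Utot u (Sstar \ Z) + u0 := by rw [hUdiff]; linarith
  have hsum : ∑ x ∈ Sstar, r x * u x
      = (∑ x ∈ Sstar \ Z, r x * u x) + ∑ x ∈ Z, r x * u x := by
    rw [Finset.sum_sdiff_eq_sub (f := fun x => r x * u x) hZS]; ring
  have hZsum : ∑ x ∈ Z, u x * r x = ∑ x ∈ Z, r x * u x := by
    exact Finset.sum_congr rfl fun x _ => mul_comm _ _
  have hdec : RevMNL u r u0 Sstar =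
      RevMNL u r u0 (Sstar \ Z) * (1 - Utot u Z / D) +
        alphaRev u r Z * (Utot u Z / D) := by
    have key : ∀ a b c : ℝ, b ≠ 0 → a / b * (b / c) = a / c := by
      intro a b c hb; rw [div_mul_div_comm, mul_comm a b, mul_div_mul_left _ _ hb]
    have h1 : 1 - Utot u Z / D = (Utot u (Sstar \ Z) + u0) / D := by
      rw [hUdiff, eq_div_iff hDpos.ne', sub_mul, div_mul_cancel₀ _ hDpos.ne']
      simp [hD]; ring
    rw [RevMNL, RevMNL, alphaRev, hsum, hZsum, h1,
      key _ _ _ hDZpos.ne', key _ _ _ hUZ.ne', ← add_div]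
  refine ⟨hdec, ?_⟩
  have hle : RevMNL u r u0 (Sstar \ Z) ≤ RevMNL u r u0 Sstar :=
    hopt _ ((Finset.sdiff_subset).trans hS)
  have hlam : 0 < Utot u Z / D := div_pos hUZ hDpos
  nlinarith [hdec, mul_le_mul_of_nonneg_right hle (sub_nonneg.mpr (le_of_lt (by
    rw [div_lt_one hDpos]; exact hUZlt : Utot u Z / D < 1)))]
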